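/- Let p > 2 be a real number. Then there exist constants 0 < λ ≤ Λ, depending only on p, such that for all real numbers a, b ≥ 0 one has λ·(a^p + b^(p−2)·a²) ≤ (a² + b²)^(p/2) − b^p ≤ Λ·(a^p + b^(p−2)·a²). -/

import Mathlib

/-- Superadditivity of `x ↦ x ^ q` on `[0, ∞)` for `1 ≤ q`. -/
lemma aux_rpow_superadd {x y q : ℝ} (hx : 0 ≤ x) (hy : 0 ≤ y) (hq : 1 ≤ q) :
    x ^ q + y ^ q ≤ (x + y) ^ q := by
  have h := NNReal.add_rpow_le_rpow_add (⟨x, hx⟩ : NNReal) (⟨y, hy⟩ : NNReal) hq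
  have := (NNReal.coe_le_coe).2 h
  push_cast [NNReal.coe_rpow] at this
  exact this

/-- `(x^2 : ℝ)^(q/2) = x^q` for `0 ≤ x`. -/
lemma aux_sq_rpow {x q : ℝ} (hx : 0 ≤ x) : (x ^ 2) ^ (q / 2) = x ^ q := by
  rw [← Real.rpow_natCast x 2, ← Real.rpow_mul hx]
  congr 1
  push_cast
  ring

set_option maxHeartbeats 1000000 in
/-- Two-sided growth estimate for the `p`-Laplacian difference, `p > 2`: there are
`0 < λ ≤ Λ` depending only on `p` such that for all `a, b ≥ 0`,
`λ (a^p + b^(p-2) a²) ≤ (a² + b²)^(p/2) - b^p ≤ Λ (a^p + b^(p-2) a²)`. -/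
theorem stmt18 (p : ℝ) (hp : 2 < p) :
    ∃ lam Lam : ℝ, 0 < lam ∧ lam ≤ Lam ∧
      ∀ a b : ℝ, 0 ≤ a → 0 ≤ b →
        lam * (a ^ p + b ^ (p - 2) * a ^ 2) ≤ (a ^ 2 + b ^ 2) ^ (p / 2) - b ^ p ∧
        (a ^ 2 + b ^ 2) ^ (p / 2) - b ^ p ≤ Lam * (a ^ p + b ^ (p - 2) * a ^ 2) := by
  have hp2 : (1 : ℝ) ≤ p / 2 := by linarith
  have hp2' : (0 : ℝ) < p - 2 := by linarith
  have htwo : (1 : ℝ) ≤ (2 : ℝ) ^ (p - 2) := Real.one_le_rpow (by norm_num) hp2'.le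
  refine ⟨1 / 2, p / 2 * 2 ^ (p - 2), by norm_num, by nlinarith, fun a b ha hb => ?_⟩
  rcases eq_or_lt_of_le ha with rfl | ha0
  · -- a = 0 : everything is zero
    have h1 : (0 : ℝ) ^ p = 0 := Real.zero_rpow (by positivity)
    have h2 : ((0 : ℝ) ^ 2 + b ^ 2) ^ (p / 2) = b ^ p := by
      rw [show (0 : ℝ) ^ 2 + b ^ 2 = b ^ 2 by ring, aux_sq_rpow hb]
    rw [h1, h2]
    norm_num
  have hS : 0 < a ^ 2 + b ^ 2 := by positivity
  set S : ℝ := a ^ 2 + b ^ 2 with hSdef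
  -- key identity: a^2 * a^(p-2) = a^p
  have haa : a ^ 2 * a ^ (p - 2) = a ^ p := by
    rw [← Real.rpow_natCast a 2, ← Real.rpow_add ha0]
    norm_num
  constructor
  · -- lower bound
    have L1 : a ^ p + b ^ p ≤ S ^ (p / 2) := by
      have := aux_rpow_superadd (by positivity : (0:ℝ) ≤ a ^ 2)
        (by positivity : (0:ℝ) ≤ b ^ 2) hp2
      rwa [aux_sq_rpow ha, aux_sq_rpow hb] at this
    have L2 : b ^ p + b ^ (p - 2) * a ^ 2 ≤ S ^ (p / 2) := by
      rcases eq_or_lt_of_le hb with rfl | hb0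
      · have h1 : (0 : ℝ) ^ p = 0 := Real.zero_rpow (by positivity)
        have h2 : (0 : ℝ) ^ (p - 2) = 0 := Real.zero_rpow (ne_of_gt hp2')
        rw [h1, h2]
        simp only [zero_mul, add_zero, zero_add]
        positivity
      · -- Bernoulli at s = a²/b²
        have hb2 : (0 : ℝ) < b ^ 2 := by positivity
        have hber := one_add_mul_self_le_rpow_one_add
          (le_trans (by norm_num : (-1:ℝ) ≤ 0) (by positivity : (0:ℝ) ≤ a ^ 2 / b ^ 2)) hp2
        have hmul : (1 + a ^ 2 / b ^ 2) ^ (p / 2) * b ^ p = S ^ (p / 2) := by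
          rw [← aux_sq_rpow hb, ← Real.mul_rpow (by positivity) hb2.le]
          congr 1
          field_simp [hSdef]
          ring
        have hbp : (0 : ℝ) < b ^ p := Real.rpow_pos_of_pos hb0 p
        have key : (1 + p / 2 * (a ^ 2 / b ^ 2)) * b ^ p ≤ S ^ (p / 2) := by
          rw [← hmul]
          exact mul_le_mul_of_nonneg_right hber hbp.le
        have hbb : b ^ 2 * b ^ (p - 2) = b ^ p := by
          rw [← Real.rpow_natCast b 2, ← Real.rpow_add hb0]
          norm_num
        have hid : (1 + p / 2 * (a ^ 2 / b ^ 2)) * b ^ p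
            = b ^ p + p / 2 * (b ^ (p - 2) * a ^ 2) := by
          rw [← hbb]
          field_simp
        rw [hid] at key
        have hpos : 0 ≤ b ^ (p - 2) * a ^ 2 := by positivity
        nlinarith
    nlinarith
  · -- upper bound
    set T : ℝ := S ^ ((p - 2) / 2) with hTdef
    have hT0 : 0 < T := Real.rpow_pos_of_pos hS _
    have hST : S ^ (p / 2) = S * T := by
      have h := Real.rpow_add hS 1 ((p - 2) / 2)
      rw [Real.rpow_one] at h
      rw [hTdef, show p / 2 = 1 + (p - 2) / 2 by ring, h]
    -- Bernoulli at s = -a²/S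
    have hfrac : a ^ 2 / S ≤ 1 := by
      rw [div_le_one hS]; nlinarith
    have hber := one_add_mul_self_le_rpow_one_add
      (show (-1 : ℝ) ≤ -(a ^ 2 / S) by linarith) hp2
    have h1s : 1 + -(a ^ 2 / S) = b ^ 2 / S := by
      field_simp [hSdef]
      linarith [hSdef]
    have hmul : (b ^ 2 / S) ^ (p / 2) * S ^ (p / 2) = b ^ p := by
      rw [← Real.mul_rpow (by positivity) hS.le, div_mul_cancel₀ _ (ne_of_gt hS),
        aux_sq_rpow hb]
    have hSp : (0 : ℝ) < S ^ (p / 2) := Real.rpow_pos_of_pos hS _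
    have key : (1 + p / 2 * -(a ^ 2 / S)) * S ^ (p / 2) ≤ b ^ p := by
      rw [← hmul]
      exact mul_le_mul_of_nonneg_right (h1s ▸ hber) hSp.le
    -- so S^{p/2} - b^p ≤ (p/2) a² T
    have step1 : S ^ (p / 2) - b ^ p ≤ p / 2 * (a ^ 2 * T) := by
      have hdiv : a ^ 2 / S * S ^ (p / 2) = a ^ 2 * T := by
        rw [hST]; field_simp
      have e : (1 + p / 2 * -(a ^ 2 / S)) * S ^ (p / 2)
          = S ^ (p / 2) - p / 2 * (a ^ 2 / S * S ^ (p / 2)) := by ring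
      rw [e, hdiv] at key
      linarith
    -- T ≤ 2^{p-2} (a^{p-2} + b^{p-2})
    have hTle : T ≤ 2 ^ (p - 2) * (a ^ (p - 2) + b ^ (p - 2)) := by
      have h1 : T ≤ (a + b) ^ (p - 2) := by
        rw [hTdef, ← aux_sq_rpow (by positivity : (0:ℝ) ≤ a + b)]
        exact Real.rpow_le_rpow hS.le (by nlinarith) (by positivity)
      have h2 : (a + b) ^ (p - 2) ≤ 2 ^ (p - 2) * (a ^ (p - 2) + b ^ (p - 2)) := by
        rcases le_total a b with hab | hab
        · calc (a + b) ^ (p - 2) ≤ (2 * b) ^ (p - 2) :=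
                Real.rpow_le_rpow (by positivity) (by linarith) hp2'.le
            _ = 2 ^ (p - 2) * b ^ (p - 2) := Real.mul_rpow (by norm_num) hb
            _ ≤ 2 ^ (p - 2) * (a ^ (p - 2) + b ^ (p - 2)) :=
                mul_le_mul_of_nonneg_left
                  (by linarith [Real.rpow_nonneg ha (p - 2)]) (by positivity)
        · calc (a + b) ^ (p - 2) ≤ (2 * a) ^ (p - 2) :=
                Real.rpow_le_rpow (by positivity) (by linarith) hp2'.le
            _ = 2 ^ (p - 2) * a ^ (p - 2) := Real.mul_rpow (by norm_num) ha
            _ ≤ 2 ^ (p - 2) * (a ^ (p - 2) + b ^ (p - 2)) :=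
                mul_le_mul_of_nonneg_left
                  (by linarith [Real.rpow_nonneg hb (p - 2)]) (by positivity)
      linarith
    have step2 : p / 2 * (a ^ 2 * T)
        ≤ p / 2 * (a ^ 2 * (2 ^ (p - 2) * (a ^ (p - 2) + b ^ (p - 2)))) :=
      mul_le_mul_of_nonneg_left (mul_le_mul_of_nonneg_left hTle (by positivity))
        (by positivity)
    have : S ^ (p / 2) - b ^ p
        ≤ p / 2 * (a ^ 2 * (2 ^ (p - 2) * (a ^ (p - 2) + b ^ (p - 2)))) :=
      le_trans step1 step2
    calc S ^ (p / 2) - b ^ p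
        ≤ p / 2 * (a ^ 2 * (2 ^ (p - 2) * (a ^ (p - 2) + b ^ (p - 2)))) := this
      _ = p / 2 * 2 ^ (p - 2) * (a ^ p + b ^ (p - 2) * a ^ 2) := by
          rw [← haa]; ring
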